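/- Let V : ℝ → ℝ be C¹ with |V'(t)| ≤ a(t)·G(V(t)) whenever V(t) ≥ v_0, and let W : ℝ → ℝ be C¹ with W'(t) ≥ a(t)·g(V(t)) whenever V(t) ≥ v_0, where a : ℝ → (0,∞) is continuous and g, G : [v_0, ∞) → (0,∞) are continuous with g(v) ≥ g(v_0) > 0 for v ≥ v_0. If the set J = {t : V(t) > v_0} is nonempty and open with V = v_0 on its boundary, and W is bounded on J, then on every connected component (a, b) of J with a, b finite, sup_{t ∈ (a,b)} F(V(t)) ≤ (W(b) − W(a))/2, where F(v) = ∫_{v_0}^{v} g/G. -/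

import Mathlib

open Set

theorem stmt_17 (v₀ : ℝ) (hv₀ : 0 < v₀)
    (V W a g G : ℝ → ℝ)
    (hV : ContDiff ℝ 1 V) (hW : ContDiff ℝ 1 W)
    (ha : Continuous a) (hapos : ∀ t, 0 < a t)
    (hg : ContinuousOn g (Ici v₀)) (hG : ContinuousOn G (Ici v₀))
    (hgpos : ∀ u ∈ Ici v₀, 0 < g u) (hGpos : ∀ u ∈ Ici v₀, 0 < G u)
    (hglb : 0 < g v₀) (hgge : ∀ u ∈ Ici v₀, g v₀ ≤ g u)
    (hVd : ∀ t, v₀ ≤ V t → |deriv V t| ≤ a t * G (V t))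
    (hWd : ∀ t, v₀ ≤ V t → a t * g (V t) ≤ deriv W t)
    (J : Set ℝ) (hJ : J = {t | v₀ < V t}) (hJne : J.Nonempty)
    (hfront : ∀ t ∈ frontier J, V t = v₀)
    (hWbdd : ∃ M : ℝ, ∀ t ∈ J, |W t| ≤ M)
    (F : ℝ → ℝ) (hF : ∀ u, F u = ∫ s in v₀..u, g s / G s) :
    ∀ a' b' : ℝ, a' < b' → Ioo a' b' ⊆ J → a' ∉ J → b' ∉ J →
      ∀ t ∈ Ioo a' b', F (V t) ≤ (W b' - W a') / 2 := by
  intro a' b' hab hsub ha' hb' t ht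
  have hVc : Continuous V := hV.continuous
  have hVdiff : Differentiable ℝ V := hV.differentiable one_ne_zero
  have hWdiff : Differentiable ℝ W := hW.differentiable one_ne_zero
  have hJopen : IsOpen J := by rw [hJ]; exact isOpen_lt continuous_const hVc
  -- values at endpoints
  have hfrontmem : ∀ x : ℝ, x ∉ J → x ∈ closure (Ioo a' b') → V x = v₀ := by
    intro x hx hcx
    apply hfront
    rw [frontier, hJopen.interior_eq]
    exact ⟨closure_mono hsub hcx, hx⟩
  have hVa : V a' = v₀ := hfrontmem a' ha'
    (by rw [closure_Ioo hab.ne]; exact ⟨le_rfl, hab.le⟩)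
  have hVb : V b' = v₀ := hfrontmem b' hb'
    (by rw [closure_Ioo hab.ne]; exact ⟨hab.le, le_rfl⟩)
  have hVge : ∀ s ∈ Icc a' b', v₀ ≤ V s := by
    intro s hs
    rcases eq_or_lt_of_le hs.1 with h1 | h1
    · rw [← h1, hVa]
    rcases eq_or_lt_of_le hs.2 with h2 | h2
    · rw [h2, hVb]
    · have : s ∈ J := hsub ⟨h1, h2⟩
      rw [hJ] at this
      exact this.le
  have hVgt : ∀ s ∈ Ioo a' b', v₀ < V s := by
    intro s hs
    have := hsub hs
    rwa [hJ] at this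
  -- the integrand
  set f : ℝ → ℝ := fun u => g u / G u with hfdef
  have hfcont : ContinuousOn f (Ici v₀) :=
    hg.div hG fun u hu => (hGpos u hu).ne'
  -- a bound for V on [a',b']
  obtain ⟨z, hz, hzmax⟩ := isCompact_Icc.exists_isMaxOn (α := ℝ)
    (⟨a', le_rfl, hab.le⟩ : (Icc a' b').Nonempty) hVc.continuousOn
  set M := V z with hM
  have hv₀M : v₀ ≤ M := hVa ▸ hzmax ⟨le_rfl, hab.le⟩
  have hmaps : MapsTo V (Icc a' b') (Icc v₀ M) := fun s hs => ⟨hVge s hs, hzmax hs⟩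
  -- the primitive
  set P : ℝ → ℝ := fun u => ∫ s in v₀..u, f s with hPdef
  have hPv₀ : P v₀ = 0 := intervalIntegral.integral_same
  have hPcont : ContinuousOn P (Icc v₀ M) := by
    have hint : MeasureTheory.IntegrableOn f (uIcc v₀ M) := by
      rw [uIcc_of_le hv₀M]
      exact (hfcont.mono (Icc_subset_Ici_self)).integrableOn_compact isCompact_Icc
    have := intervalIntegral.continuousOn_primitive_interval hint
    rwa [uIcc_of_le hv₀M] at this
  have hPVcont : ContinuousOn (fun s => P (V s)) (Icc a' b') :=
    hPcont.comp hVc.continuousOn hmaps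
  -- derivative of P ∘ V at interior points
  have hderiv : ∀ s ∈ Ioo a' b',
      HasDerivAt (fun s => P (V s)) (f (V s) * deriv V s) s := by
    intro s hs
    have hlt := hVgt s hs
    have hmem : Ici v₀ ∈ nhds (V s) := Ici_mem_nhds hlt
    have hmeas : StronglyMeasurableAtFilter f (nhds (V s)) :=
      (hfcont.mono fun u (hu : u ∈ Ioi v₀) => mem_Ici.mpr hu.le).stronglyMeasurableAtFilter
        isOpen_Ioi _ hlt
    have hcontat : ContinuousAt f (V s) := hfcont.continuousAt hmem
    have hint : IntervalIntegrable f MeasureTheory.volume v₀ (V s) := by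
      apply ContinuousOn.intervalIntegrable
      apply hfcont.mono
      rw [uIcc_of_le hlt.le]
      exact Icc_subset_Ici_self
    have hP : HasDerivAt P (f (V s)) (V s) :=
      intervalIntegral.integral_hasDerivAt_right hint hmeas hcontat
    exact hP.comp s (hVdiff s).hasDerivAt
  -- key bound on the derivative
  have hkey : ∀ s ∈ Ioo a' b', |f (V s) * deriv V s| ≤ a s * g (V s) := by
    intro s hs
    have hVs : V s ∈ Ici v₀ := (hVgt s hs).le
    have hGpos' := hGpos _ hVs
    have hgpos' := hgpos _ hVs
    have hf0 : 0 ≤ f (V s) := le_of_lt (div_pos hgpos' hGpos')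
    calc |f (V s) * deriv V s| = f (V s) * |deriv V s| := by
          rw [abs_mul, abs_of_nonneg hf0]
      _ ≤ f (V s) * (a s * G (V s)) :=
          mul_le_mul_of_nonneg_left (hVd s hVs) hf0
      _ = a s * g (V s) := by
          field_simp [hfdef]
          simp only [hfdef]; rw [div_mul_eq_mul_div, div_mul_eq_mul_div, div_eq_iff hGpos'.ne']; ring
  -- monotone on the left: W - P ∘ V
  have hleft : P (V t) ≤ W t - W a' := by
    have hmono : MonotoneOn (fun s => W s - P (V s)) (Icc a' t) := by
      apply monotoneOn_of_deriv_nonneg (convex_Icc _ _)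
      · exact hWdiff.continuous.continuousOn.sub
          (hPVcont.mono (Icc_subset_Icc le_rfl ht.2.le))
      · rw [interior_Icc]
        intro x hx
        have hx' : x ∈ Ioo a' b' := ⟨hx.1, hx.2.trans ht.2⟩
        exact ((hWdiff x).hasDerivAt.sub (hderiv x hx')).differentiableAt.differentiableWithinAt
      · rw [interior_Icc]
        intro x hx
        have hx' : x ∈ Ioo a' b' := ⟨hx.1, hx.2.trans ht.2⟩
        rw [show deriv (fun s => W s - P (V s)) x = deriv W x - f (V x) * deriv V x from ((hWdiff x).hasDerivAt.sub (hderiv x hx')).deriv]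
        have h1 := hWd x (hVgt x hx').le
        have h2 := (abs_le.mp (hkey x hx')).2
        linarith
    have := hmono ⟨le_rfl, ht.1.le⟩ ⟨ht.1.le, le_rfl⟩ ht.1.le
    simp only [hVa, hPv₀, sub_zero] at this
    linarith
  -- monotone on the right: W + P ∘ V
  have hright : P (V t) ≤ W b' - W t := by
    have hmono : MonotoneOn (fun s => W s + P (V s)) (Icc t b') := by
      apply monotoneOn_of_deriv_nonneg (convex_Icc _ _)
      · exact hWdiff.continuous.continuousOn.add
          (hPVcont.mono (Icc_subset_Icc ht.1.le le_rfl))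
      · rw [interior_Icc]
        intro x hx
        have hx' : x ∈ Ioo a' b' := ⟨ht.1.trans hx.1, hx.2⟩
        exact ((hWdiff x).hasDerivAt.add (hderiv x hx')).differentiableAt.differentiableWithinAt
      · rw [interior_Icc]
        intro x hx
        have hx' : x ∈ Ioo a' b' := ⟨ht.1.trans hx.1, hx.2⟩
        rw [show deriv (fun s => W s + P (V s)) x = deriv W x + f (V x) * deriv V x from ((hWdiff x).hasDerivAt.add (hderiv x hx')).deriv]
        have h1 := hWd x (hVgt x hx').le
        have h2 := (abs_le.mp (hkey x hx')).1
        linarith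
    have := hmono ⟨le_rfl, ht.2.le⟩ ⟨ht.2.le, le_rfl⟩ ht.2.le
    simp only [hVb, hPv₀, add_zero] at this
    linarith
  have : F (V t) = P (V t) := hF (V t)
  rw [this]
  linarith
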